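/- Let d ≥ 1 and let λ, λ̂ ∈ ℂ^d satisfy |λ_k| ≤ 1 and |λ̂_k| ≤ 1 for every k ∈ {1,…,d}. Let R_1, …, R_d and R̃_1, …, R̃_d be given complex numbers, and for every integer h ≥ d+1 define R_h := Σ_{k=1}^{d} (−1)^{k+1} e_k(λ) · R_{h−k} and R̃_h := Σ_{k=1}^{d} (−1)^{k+1} e_k(λ̂) · R̃_{h−k}. Then for every integer h ≥ 1, |R̃_h − R_h| ≤ 2^{2d} · h · ∏_{k=2}^{d} ( Σ_{j=0}^{h−1} |λ_k|^j ) · ∏_{k=2}^{d} ( Σ_{j=0}^{h−1} |λ̂_k|^j ) · max_{1 ≤ h' ≤ 3d} |R_{h'} − R̃_{h'}|. -/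

import Mathlib

open Finset

/-- The `k`-th elementary symmetric polynomial of `lam 1, …, lam d`. -/
noncomputable def esymm (d : ℕ) (lam : Fin d → ℂ) (k : ℕ) : ℂ :=
  ∑ S ∈ Finset.powersetCard k (Finset.univ : Finset (Fin d)), ∏ j ∈ S, lam j

section INFRA


noncomputable def Tsh (μ : ℂ) (A : ℕ → ℂ) : ℕ → ℂ := fun n => A (n+1) - μ * A n

noncomputable def opL (L : List ℂ) (A : ℕ → ℂ) : ℕ → ℂ := L.foldr Tsh A

@[simp] lemma opL_nil (A : ℕ → ℂ) : opL [] A = A := rfl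

@[simp] lemma opL_cons (μ : ℂ) (L : List ℂ) (A : ℕ → ℂ) :
    opL (μ :: L) A = Tsh μ (opL L A) := rfl

lemma opL_append (L1 L2 : List ℂ) (A : ℕ → ℂ) :
    opL (L1 ++ L2) A = opL L1 (opL L2 A) := List.foldr_append

lemma Top_comm (a b : ℂ) (A : ℕ → ℂ) : Tsh a (Tsh b A) = Tsh b (Tsh a A) := by
  funext n; simp only [Tsh]; ring

lemma opL_perm {L L' : List ℂ} (h : L.Perm L') (A : ℕ → ℂ) : opL L A = opL L' A := by
  induction h with
  | nil => rfl
  | cons x _ ih => simp [ih]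
  | swap x y l => simp [Top_comm]
  | trans _ _ ih1 ih2 => rw [ih1, ih2]

lemma opL_sub (L : List ℂ) (A B : ℕ → ℂ) :
    opL L (fun n => A n - B n) = fun n => opL L A n - opL L B n := by
  induction L with
  | nil => rfl
  | cons μ L ih => funext n; simp [Tsh, ih]; ring

lemma opL_zero_of (L : List ℂ) (A : ℕ → ℂ) (m : ℕ) (h : ∀ n, m ≤ n → A n = 0) :
    ∀ n, m ≤ n → opL L A n = 0 := by
  induction L with
  | nil => exact h
  | cons μ L ih =>
    intro n hn
    simp [Tsh, ih n hn, ih (n+1) (by omega)]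

lemma esymm_cons (a : ℂ) (s : Multiset ℂ) (k : ℕ) :
    (a ::ₘ s).esymm (k+1) = s.esymm (k+1) + a * s.esymm k := by
  simp [Multiset.esymm, Multiset.powersetCard_cons, Multiset.map_map, Function.comp_def,
    Multiset.sum_map_mul_left]

lemma esymm_top (s : Multiset ℂ) (k : ℕ) (h : Multiset.card s < k) : s.esymm k = 0 := by
  simp [Multiset.esymm, Multiset.powersetCard_eq_empty _ h]

lemma opL_esymm (L : List ℂ) (A : ℕ → ℂ) :
    ∀ n, opL L A n =
      ∑ k ∈ range (L.length + 1),
        (-1 : ℂ)^k * (↑L : Multiset ℂ).esymm k * A (n + L.length - k) := by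
  induction L with
  | nil => intro n; simp [Multiset.esymm]
  | cons μ L ih =>
    intro n
    set l := L.length with hl
    set S1 : ℂ := ∑ i ∈ range (l+1), (-1:ℂ)^(i+1) * (↑L : Multiset ℂ).esymm (i+1) * A (n+l-i) with hS1
    set S2 : ℂ := ∑ i ∈ range (l+1), (-1:ℂ)^i * (↑L : Multiset ℂ).esymm i * A (n+l-i) with hS2
    have hA : opL L A (n+1) = A (n+l+1) + S1 := by
      rw [ih (n+1), Finset.sum_range_succ']
      have h1 : ∀ i, (-1:ℂ)^(i+1) * (↑L : Multiset ℂ).esymm (i+1) * A (n+1+l-(i+1))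
          = (-1:ℂ)^(i+1) * (↑L : Multiset ℂ).esymm (i+1) * A (n+l-i) := by
        intro i; congr 2; omega
      rw [hS1, Finset.sum_range_succ]
      rw [esymm_top (↑L) (l+1) (by simp [hl])]
      simp only [h1]
      have he0 : (↑L : Multiset ℂ).esymm 0 = 1 := by simp [Multiset.esymm]
      have harg : n+1+l-0 = n+l+1 := by omega
      rw [he0, harg]
      ring
    have hB : opL L A n = S2 := ih n
    have hcoe : ((μ :: L : List ℂ) : Multiset ℂ) = μ ::ₘ (↑L : Multiset ℂ) := rfl
    have hRHS : ∑ k ∈ range ((μ :: L).length + 1),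
        (-1 : ℂ)^k * ((μ :: L : List ℂ) : Multiset ℂ).esymm k * A (n + (μ :: L).length - k)
        = A (n+l+1) + S1 - μ * S2 := by
      rw [hcoe]
      show ∑ k ∈ range (l+1+1), (-1 : ℂ)^k * (μ ::ₘ (↑L : Multiset ℂ)).esymm k * A (n + (l+1) - k) = _
      rw [Finset.sum_range_succ']
      have h2 : ∀ i, (-1:ℂ)^(i+1) * (μ ::ₘ (↑L : Multiset ℂ)).esymm (i+1) * A (n+(l+1)-(i+1))
          = (-1:ℂ)^(i+1) * (↑L : Multiset ℂ).esymm (i+1) * A (n+l-i)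
            + (-((-1:ℂ)^i)) * (μ * ((↑L : Multiset ℂ).esymm i * A (n+l-i))) := by
        intro i
        have harg : n+(l+1)-(i+1) = n+l-i := by omega
        rw [harg, esymm_cons]
        ring
      have h3 : ∀ x : ℕ, (-((-1:ℂ)^x)) * (μ * ((↑L : Multiset ℂ).esymm x * A (n+l-x)))
          = μ * (-((-1:ℂ)^x * (↑L : Multiset ℂ).esymm x * A (n+l-x))) := by intro x; ring
      simp only [h2, Finset.sum_add_distrib, ← hS1, h3, ← Finset.mul_sum]
      have he0 : (μ ::ₘ (↑L : Multiset ℂ)).esymm 0 = 1 := by simp [Multiset.esymm]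
      have harg : n+(l+1)-0 = n+l+1 := by omega
      rw [he0, harg, Finset.sum_neg_distrib, ← hS2]
      ring
    show opL L A (n+1) - μ * opL L A n = _
    rw [hA, hB, hRHS]

noncomputable def Gg (μ : ℂ) (n : ℕ) : ℝ := ∑ s ∈ range n, ‖μ‖ ^ s

lemma Gg_nonneg (μ : ℂ) (n : ℕ) : 0 ≤ Gg μ n :=
  Finset.sum_nonneg fun i _ => pow_nonneg (norm_nonneg μ) i

lemma Gg_mono (μ : ℂ) : Monotone (Gg μ) := fun m n h =>
  Finset.sum_le_sum_of_subset_of_nonneg (Finset.range_subset_range.2 h)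
    (fun i _ _ => pow_nonneg (norm_nonneg μ) i)

lemma Gg_one (μ : ℂ) : Gg μ 1 = 1 := by simp [Gg]

lemma Gg_succ (μ : ℂ) (n : ℕ) : Gg μ (n+1) = 1 + ‖μ‖ * Gg μ n := by
  rw [Gg, Gg, geom_sum_succ]; ring

lemma opL_init_bound (M : ℝ) : ∀ (L : List ℂ), (∀ μ ∈ L, ‖μ‖ ≤ 1) →
    ∀ (A : ℕ → ℂ) (n : ℕ),
    (∀ j, n ≤ j → j ≤ n + L.length → ‖A j‖ ≤ M) →
    ‖opL L A n‖ ≤ 2 ^ L.length * M := by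
  intro L
  induction L with
  | nil => intro _ A n h; simpa using h n le_rfl (by simp)
  | cons μ L ih =>
    intro hle A n h
    have hμ : ‖μ‖ ≤ 1 := hle μ (List.mem_cons_self)
    have h1 : ‖opL L A (n+1)‖ ≤ 2 ^ L.length * M :=
      ih (fun ν hν => hle ν (List.mem_cons_of_mem _ hν)) A (n+1)
        (fun j hj hj' => h j (by omega) (by simp at hj' ⊢; omega))
    have h2 : ‖opL L A n‖ ≤ 2 ^ L.length * M :=
      ih (fun ν hν => hle ν (List.mem_cons_of_mem _ hν)) A n
        (fun j hj hj' => h j hj (by simp at hj' ⊢; omega))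
    have habs : ∀ x y : ℂ, ‖x - y‖ ≤ ‖x‖ + ‖y‖ := by
      intro x y; simpa [sub_eq_add_neg] using norm_add_le x (-y)
    have : ‖opL (μ :: L) A n‖
        ≤ ‖opL L A (n+1)‖ + ‖μ‖ * ‖opL L A n‖ := by
      rw [opL_cons]
      calc ‖Tsh μ (opL L A) n‖
          = ‖opL L A (n+1) - μ * opL L A n‖ := rfl
        _ ≤ ‖opL L A (n+1)‖ + ‖μ * opL L A n‖ := habs _ _
        _ = _ := by rw [norm_mul]
    simp only [List.length_cons]
    have hμb : ‖μ‖ * ‖opL L A n‖ ≤ ‖opL L A n‖ := by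
      nlinarith [norm_nonneg (opL L A n)]
    calc ‖opL (μ :: L) A n‖
        ≤ ‖opL L A (n+1)‖ + ‖μ‖ * ‖opL L A n‖ := this
      _ ≤ 2 ^ L.length * M + 2 ^ L.length * M := by
          have := hμb.trans h2; linarith
      _ = 2 ^ (L.length + 1) * M := by ring

lemma bound_const (μ : ℂ) (hμ : ‖μ‖ ≤ 1) (B : ℕ → ℂ)
    (h : ∀ n, 1 ≤ n → B (n+1) - μ * B n = 0) :
    ∀ n, 1 ≤ n → ‖B n‖ ≤ ‖B 1‖ := by
  intro n hn
  induction n, hn using Nat.le_induction with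
  | base => exact le_rfl
  | succ n hn ihn =>
    have hB : B (n+1) = μ * B n := by have := h n hn; linear_combination this
    rw [hB, norm_mul]
    nlinarith [norm_nonneg (B n), norm_nonneg μ]

lemma bound_linear (μ : ℂ) (hμ : ‖μ‖ ≤ 1) (B : ℕ → ℂ) (C K : ℝ) (hK : K ≤ C)
    (h1 : ‖B 1‖ ≤ C)
    (h : ∀ n, 1 ≤ n → ‖B (n+1) - μ * B n‖ ≤ K) :
    ∀ n, 1 ≤ n → ‖B n‖ ≤ C * n := by
  intro n hn
  induction n, hn using Nat.le_induction with
  | base => simpa using h1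
  | succ n hn ihn =>
    have : ‖B (n+1)‖ ≤ ‖μ‖ * ‖B n‖ + K := by
      calc ‖B (n+1)‖ = ‖μ * B n + (B (n+1) - μ * B n)‖ := by ring_nf
        _ ≤ ‖μ * B n‖ + ‖B (n+1) - μ * B n‖ := norm_add_le _ _
        _ ≤ ‖μ‖ * ‖B n‖ + K := by rw [norm_mul]; linarith [h n hn]
    have hμb : ‖μ‖ * ‖B n‖ ≤ ‖B n‖ := by
      nlinarith [norm_nonneg (B n)]
    push_cast
    nlinarith [norm_nonneg (B n)]

lemma peel : ∀ (L : List ℂ), (∀ μ ∈ L, ‖μ‖ ≤ 1) → ∀ (A : ℕ → ℂ) (f : ℕ → ℝ),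
    Monotone f → (∀ n, 0 ≤ f n) →
    (∀ L', L' <:+ L → ‖opL L' A 1‖ ≤ f 1) →
    (∀ n, 1 ≤ n → ‖opL L A n‖ ≤ f n) →
    ∀ n, 1 ≤ n → ‖A n‖ ≤ f n * (L.map (fun μ => Gg μ n)).prod := by
  intro L
  induction L with
  | nil => intro _ A f _ _ _ hrec n hn; simpa using hrec n hn
  | cons μ L ih =>
    intro hle A f hf hf0 hinit hrec
    have hμ : ‖μ‖ ≤ 1 := hle μ (List.mem_cons_self)
    have hstep : ∀ n, 1 ≤ n → ‖opL L A n‖ ≤ f n * Gg μ n := by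
      intro n hn
      induction n, hn using Nat.le_induction with
      | base => rw [Gg_one, mul_one]; exact hinit L (List.suffix_cons μ L)
      | succ n hn ihn =>
        have h0 : ‖opL (μ :: L) A n‖ ≤ f n := hrec n hn
        have hdec : ‖opL L A (n+1)‖
            ≤ ‖μ‖ * ‖opL L A n‖ + f n := by
          calc ‖opL L A (n+1)‖
              = ‖μ * opL L A n + (opL L A (n+1) - μ * opL L A n)‖ := by ring_nf
            _ ≤ ‖μ * opL L A n‖ + ‖opL L A (n+1) - μ * opL L A n‖ :=
                norm_add_le _ _
            _ ≤ ‖μ‖ * ‖opL L A n‖ + f n := by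
                rw [norm_mul]
                have : ‖opL (μ :: L) A n‖ = ‖opL L A (n+1) - μ * opL L A n‖ := rfl
                linarith [this ▸ h0]
        have hmono : f n ≤ f (n+1) := hf (by omega)
        rw [Gg_succ]
        calc ‖opL L A (n+1)‖
            ≤ ‖μ‖ * (f n * Gg μ n) + f n := by
              nlinarith [norm_nonneg μ, norm_nonneg (opL L A n)]
          _ ≤ f (n+1) * (1 + ‖μ‖ * Gg μ n) := by
              have h1 : ‖μ‖ * Gg μ n * f n ≤ ‖μ‖ * Gg μ n * f (n+1) :=
                mul_le_mul_of_nonneg_left hmono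
                  (mul_nonneg (norm_nonneg μ) (Gg_nonneg μ n))
              nlinarith [h1]
    have hmono' : Monotone (fun n => f n * Gg μ n) := by
      intro m n h
      exact mul_le_mul (hf h) (Gg_mono μ h) (Gg_nonneg μ m) (hf0 n)
    have hres := ih (fun ν hν => hle ν (List.mem_cons_of_mem _ hν)) A (fun n => f n * Gg μ n)
      hmono' (fun n => mul_nonneg (hf0 n) (Gg_nonneg μ n))
      (fun L' hL' => by simpa [Gg_one] using hinit L' (hL'.trans (List.suffix_cons μ L)))
      hstep
    intro n hn
    have := hres n hn
    simpa [mul_assoc] using this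

end INFRA

lemma esymm_multiset {d : ℕ} (lam : Fin d → ℂ) (k : ℕ) :
    ((List.ofFn lam : List ℂ) : Multiset ℂ).esymm k = esymm d lam k := by
  have h : ((List.ofFn lam : List ℂ) : Multiset ℂ) = (Finset.univ.val.map lam) := by
    rw [Fin.univ_val_map]
  rw [h, Finset.esymm_map_val]
  rfl

lemma ann_of_rec {e : ℕ} (lam : Fin (e+1) → ℂ) (R : ℕ → ℂ)
    (hR : ∀ h : ℕ, (e+1) + 1 ≤ h →
      R h = ∑ k ∈ Finset.Icc 1 (e+1), (-1 : ℂ) ^ (k + 1) * esymm (e+1) lam k * R (h - k)) :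
    ∀ n, 1 ≤ n → opL (List.ofFn lam) R n = 0 := by
  intro n hn
  rw [opL_esymm]
  have hlen : (List.ofFn lam).length = e + 1 := List.length_ofFn (f := lam)
  simp only [hlen, esymm_multiset]
  have hsplit : range (e+1+1) = insert 0 (Finset.Icc 1 (e+1)) := by
    ext x; simp; omega
  rw [hsplit, Finset.sum_insert (by simp)]
  have he0 : esymm (e+1) lam 0 = 1 := by simp [esymm]
  rw [he0]
  have hRn := hR (n + (e+1)) (by omega)
  simp only [pow_zero, one_mul, Nat.sub_zero, hRn]
  rw [← Finset.sum_add_distrib]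
  apply Finset.sum_eq_zero
  intro k _
  ring


/-- Lemma E.1: adaptive error propagation bound for order-`d` autoregressions, whose
constants depend on the eigenspectra `λ` and `λ̂`. -/
theorem adaptive_error_propagation_bound (d : ℕ) (hd : 1 ≤ d) (lam lamh : Fin d → ℂ)
    (hlam : ∀ k, ‖lam k‖ ≤ 1) (hlamh : ∀ k, ‖lamh k‖ ≤ 1)
    (R Rt : ℕ → ℂ)
    (hR : ∀ h : ℕ, d + 1 ≤ h →
      R h = ∑ k ∈ Finset.Icc 1 d, (-1 : ℂ) ^ (k + 1) * esymm d lam k * R (h - k))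
    (hRt : ∀ h : ℕ, d + 1 ≤ h →
      Rt h = ∑ k ∈ Finset.Icc 1 d, (-1 : ℂ) ^ (k + 1) * esymm d lamh k * Rt (h - k)) :
    ∀ h : ℕ, 1 ≤ h →
      ‖Rt h - R h‖ ≤
        2 ^ (2 * d) * (h : ℝ) *
          (∏ k ∈ Finset.univ.filter (fun k : Fin d => 1 ≤ (k : ℕ)),
            ∑ j ∈ Finset.range h, ‖lam k‖ ^ j) *
          (∏ k ∈ Finset.univ.filter (fun k : Fin d => 1 ≤ (k : ℕ)),
            ∑ j ∈ Finset.range h, ‖lamh k‖ ^ j) *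
          (Finset.Icc 1 (3 * d)).sup' (Finset.nonempty_Icc.mpr (by omega))
            (fun h' => ‖R h' - Rt h'‖) := by
  obtain ⟨e, rfl⟩ : ∃ e, d = e + 1 := ⟨d - 1, by omega⟩
  intro h hh
  -- basic data
  have hne : (Finset.Icc 1 (3 * (e+1))).Nonempty := Finset.nonempty_Icc.mpr (by omega)
  set M : ℝ := (Finset.Icc 1 (3 * (e+1))).sup' hne (fun h' => ‖R h' - Rt h'‖) with hMdef
  set D : ℕ → ℂ := fun n => Rt n - R n with hDdef
  have hMb : ∀ j, 1 ≤ j → j ≤ 3 * (e+1) → ‖D j‖ ≤ M := by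
    intro j hj hj'
    have : ‖D j‖ = ‖R j - Rt j‖ := by
      rw [hDdef]; exact norm_sub_rev _ _
    rw [this]
    exact Finset.le_sup' (fun h' => ‖R h' - Rt h'‖) (Finset.mem_Icc.mpr ⟨hj, hj'⟩)
  have hM0 : 0 ≤ M := le_trans (norm_nonneg (D 1)) (hMb 1 le_rfl (by omega))
  -- lists
  set tl : List ℂ := List.ofFn (fun i : Fin e => lam i.succ) with htl
  set tlh : List ℂ := List.ofFn (fun i : Fin e => lamh i.succ) with htlh
  have hLl : List.ofFn lam = lam 0 :: tl := by rw [List.ofFn_succ]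
  have hLlh : List.ofFn lamh = lamh 0 :: tlh := by rw [List.ofFn_succ]
  set L2 : List ℂ := tl ++ tlh with hL2
  set L1 : List ℂ := lamh 0 :: L2 with hL1
  set Lfull : List ℂ := lam 0 :: L1 with hLf
  have hlen2 : L2.length = 2 * e := by simp [hL2, htl, htlh]; omega
  have hlen1 : L1.length = 2 * e + 1 := by simp [hL1, hlen2]
  have hall2 : ∀ μ ∈ L2, ‖μ‖ ≤ 1 := by
    intro μ hμ
    rw [hL2, List.mem_append] at hμ
    rcases hμ with hμ | hμ <;> rw [List.mem_ofFn] at hμ <;> obtain ⟨i, rfl⟩ := hμ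
    · exact hlam _
    · exact hlamh _
  have hall1 : ∀ μ ∈ L1, ‖μ‖ ≤ 1 := by
    intro μ hμ
    rcases List.mem_cons.mp hμ with rfl | hμ
    · exact hlamh 0
    · exact hall2 μ hμ
  -- annihilation
  have hannR : ∀ n, 1 ≤ n → opL (List.ofFn lam) R n = 0 := ann_of_rec lam R hR
  have hannRt : ∀ n, 1 ≤ n → opL (List.ofFn lamh) Rt n = 0 := ann_of_rec lamh Rt hRt
  have hperm1 : (List.ofFn lam ++ List.ofFn lamh).Perm Lfull := by
    rw [hLl, hLlh, hLf, hL1, hL2]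
    exact List.Perm.cons _ List.perm_middle
  have hperm2 : (List.ofFn lamh ++ List.ofFn lam).Perm Lfull := by
    rw [hLl, hLlh, hLf, hL1, hL2]
    show (lamh 0 :: (tlh ++ (lam 0 :: tl))).Perm (lam 0 :: lamh 0 :: (tl ++ tlh))
    refine (List.Perm.cons _ List.perm_middle).trans ?_
    refine (List.Perm.swap _ _ _).trans ?_
    exact List.Perm.cons _ (List.Perm.cons _ List.perm_append_comm)
  have hannD : ∀ n, 1 ≤ n → opL Lfull D n = 0 := by
    intro n hn
    have h1 : opL Lfull Rt n = 0 := by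
      rw [← opL_perm hperm1 Rt, opL_append]
      exact opL_zero_of _ _ 1 hannRt n hn
    have h2 : opL Lfull R n = 0 := by
      rw [← opL_perm hperm2 R, opL_append]
      exact opL_zero_of _ _ 1 hannR n hn
    rw [hDdef, opL_sub]
    simp [h1, h2]
  -- initial bounds
  have hinitL : ∀ L' : List ℂ, L'.length ≤ 2 * e + 1 → (∀ μ ∈ L', ‖μ‖ ≤ 1) →
      ‖opL L' D 1‖ ≤ 2 ^ L'.length * M := by
    intro L' hlen' hall'
    exact opL_init_bound M L' hall' D 1 (fun j hj hj' => hMb j hj (by omega))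
  -- decay of B1
  have hB1 : ∀ n, 1 ≤ n → ‖opL L1 D n‖ ≤ 2 ^ (2*e+1) * M := by
    intro n hn
    have hc : ∀ m, 1 ≤ m → opL L1 D (m+1) - lam 0 * opL L1 D m = 0 := by
      intro m hm
      have : opL L1 D (m+1) - lam 0 * opL L1 D m = opL Lfull D m := rfl
      rw [this]; exact hannD m hm
    have h1 := bound_const (lam 0) (hlam 0) (opL L1 D) hc n hn
    refine h1.trans ?_
    have := hinitL L1 (by omega) hall1
    rwa [hlen1] at this
  -- linear bound for B2
  have hB2 : ∀ n, 1 ≤ n → ‖opL L2 D n‖ ≤ (2 ^ (2*e+1) * M) * n := by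
    apply bound_linear (lamh 0) (hlamh 0) (opL L2 D) _ _ le_rfl
    · have := hinitL L2 (by omega) hall2
      rw [hlen2] at this
      refine this.trans ?_
      have : (2:ℝ) ^ (2*e) ≤ 2 ^ (2*e+1) := by
        apply pow_le_pow_right₀ one_le_two; omega
      nlinarith
    · intro n hn
      have : opL L2 D (n+1) - lamh 0 * opL L2 D n = opL L1 D n := rfl
      rw [this]; exact hB1 n hn
  -- peel
  have hpeel := peel L2 hall2 D (fun n => (2 ^ (2*e+1) * M) * n)
    (by
      intro m n hmn
      have : (m:ℝ) ≤ n := by exact_mod_cast hmn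
      have h2M : (0:ℝ) ≤ 2 ^ (2*e+1) * M := by positivity
      exact mul_le_mul_of_nonneg_left this h2M)
    (fun n => by positivity)
    (by
      intro L' hL'
      have hlen' : L'.length ≤ 2 * e := hlen2 ▸ hL'.length_le
      have := hinitL L' (by omega) (fun μ hμ => hall2 μ (hL'.subset hμ))
      refine this.trans ?_
      have h2 : (2:ℝ) ^ L'.length ≤ 2 ^ (2*e+1) := by
        apply pow_le_pow_right₀ one_le_two; omega
      push_cast
      nlinarith)
    hB2 h hh
  -- convert products
  have hfilter : ∀ m : ℕ, ∀ f : Fin (m+1) → ℂ,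
      (Finset.univ.filter (fun k : Fin (m+1) => 1 ≤ (k : ℕ)))
      = Finset.map ⟨Fin.succ, Fin.succ_injective m⟩ Finset.univ := by
    intro m f
    ext k
    simp only [Finset.mem_filter, Finset.mem_univ, true_and, Finset.mem_map,
      Function.Embedding.coeFn_mk]
    constructor
    · intro hk
      cases k using Fin.cases with
      | zero => simp at hk
      | succ i => exact ⟨i, by simp⟩
    · rintro ⟨i, -, rfl⟩
      simp [Fin.val_succ]
  have hprodl : (tl.map (fun μ => Gg μ h)).prod
      = ∏ k ∈ Finset.univ.filter (fun k : Fin (e+1) => 1 ≤ (k : ℕ)),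
          ∑ j ∈ Finset.range h, ‖lam k‖ ^ j := by
    rw [hfilter e lam, Finset.prod_map]
    rw [htl, List.map_ofFn, List.prod_ofFn]
    rfl
  have hprodlh : (tlh.map (fun μ => Gg μ h)).prod
      = ∏ k ∈ Finset.univ.filter (fun k : Fin (e+1) => 1 ≤ (k : ℕ)),
          ∑ j ∈ Finset.range h, ‖lamh k‖ ^ j := by
    rw [hfilter e lamh, Finset.prod_map]
    rw [htlh, List.map_ofFn, List.prod_ofFn]
    rfl
  have hsplitprod : (L2.map (fun μ => Gg μ h)).prod
      = (tl.map (fun μ => Gg μ h)).prod * (tlh.map (fun μ => Gg μ h)).prod := by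
    rw [hL2, List.map_append, List.prod_append]
  -- finish
  set Pl : ℝ := ∏ k ∈ Finset.univ.filter (fun k : Fin (e+1) => 1 ≤ (k : ℕ)),
    ∑ j ∈ Finset.range h, ‖lam k‖ ^ j with hPl
  set Plh : ℝ := ∏ k ∈ Finset.univ.filter (fun k : Fin (e+1) => 1 ≤ (k : ℕ)),
    ∑ j ∈ Finset.range h, ‖lamh k‖ ^ j with hPlh
  have hPl0 : 0 ≤ Pl := Finset.prod_nonneg fun k _ =>
    Finset.sum_nonneg fun j _ => pow_nonneg (norm_nonneg _) j
  have hPlh0 : 0 ≤ Plh := Finset.prod_nonneg fun k _ =>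
    Finset.sum_nonneg fun j _ => pow_nonneg (norm_nonneg _) j
  have hfin : ‖D h‖ ≤ 2 ^ (2*e+1) * M * (h:ℝ) * (Pl * Plh) := by
    have := hpeel
    rw [hsplitprod, hprodl, hprodlh] at this
    simpa using this
  have hstep2 : 2 ^ (2*e+1) * M * (h:ℝ) * (Pl * Plh)
      ≤ 2 ^ (2 * (e+1)) * (h:ℝ) * Pl * Plh * M := by
    have key : (2:ℝ) ^ (2*e+1) ≤ 2 ^ (2*(e+1)) := by
      apply pow_le_pow_right₀ one_le_two; omega
    have hh0 : (0:ℝ) ≤ (h:ℝ) := Nat.cast_nonneg h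
    have hrest : (0:ℝ) ≤ M * h * (Pl * Plh) := by positivity
    calc 2 ^ (2*e+1) * M * (h:ℝ) * (Pl * Plh)
        = 2 ^ (2*e+1) * (M * h * (Pl * Plh)) := by ring
      _ ≤ 2 ^ (2*(e+1)) * (M * h * (Pl * Plh)) := mul_le_mul_of_nonneg_right key hrest
      _ = 2 ^ (2 * (e+1)) * (h:ℝ) * Pl * Plh * M := by ring
  exact (hfin.trans hstep2)
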